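/- Let x_1,…,x_m ∈ ℝ^d satisfy max_i ‖x_i‖ ≤ 1 and be separable with margin γ ∈ (0,1], let ℓ(z) = exp(−z) be the exponential loss, and let w(·) be the gradient flow of the empirical risk L̂ started at the origin. Then for any time T > 1/γ² and any α ∈ [0,1], at least (1 − (γ²T)^{−α})·m of the indices i ∈ {1,…,m} satisfy x_iᵀ(w(T)/‖w(T)‖) > (1−α)γ/2. -/

import Mathlib

open scoped RealInnerProductSpace

section aux
variable {d m : ℕ} (x : Fin m → EuclideanSpace ℝ (Fin d))

lemma grad_lemma (L : EuclideanSpace ℝ (Fin d) → ℝ)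
    (hL : ∀ v, L v = (1 / m) * ∑ i, Real.exp (-⟪x i, v⟫))
    (v : EuclideanSpace ℝ (Fin d)) :
    HasGradientAt L (-((m:ℝ)⁻¹ • ∑ i, Real.exp (-⟪x i, v⟫) • x i)) v := by
  rw [hasGradientAt_iff_hasFDerivAt]
  have h1 : ∀ i : Fin m, HasFDerivAt (fun u : EuclideanSpace ℝ (Fin d) => Real.exp (-⟪x i, u⟫))
      (Real.exp (-⟪x i, v⟫) • -(innerSL ℝ (x i))) v := by
    intro i
    have hinner : HasFDerivAt (fun u : EuclideanSpace ℝ (Fin d) => ⟪x i, u⟫)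
        (innerSL ℝ (x i)) v := (innerSL ℝ (x i)).hasFDerivAt
    exact (Real.hasDerivAt_exp (-⟪x i, v⟫)).comp_hasFDerivAt v hinner.neg
  have hsum := HasFDerivAt.fun_sum (fun i (_ : i ∈ Finset.univ) => h1 i)
  have hmul := hsum.const_mul ((m:ℝ)⁻¹)
  have : L = fun u => (m:ℝ)⁻¹ * ∑ i, Real.exp (-⟪x i, u⟫) := by
    funext u; rw [hL u, one_div]
  rw [this]
  convert hmul using 1
  · rfl
  apply ContinuousLinearMap.ext
  intro y
  simp [inner_neg_left, inner_smul_left, inner_sum, real_inner_smul_left, Finset.mul_sum,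
    InnerProductSpace.toDual_apply_apply, real_inner_comm]

end aux


/-- Theorem 2 of the paper. For the exponential loss and
gradient flow on a dataset separable with margin `γ`, for any `T > 1/γ²` and
`α ∈ [0,1]`, at least `(1 − (γ²T)^{−α})·m` of the indices `i` satisfy
`xᵢᵀ(w(T)/‖w(T)‖) > (1−α)γ/2`. -/
theorem stmt_4 {d m : ℕ} (hm : 0 < m)
    (x : Fin m → EuclideanSpace ℝ (Fin d)) (hx : ∀ i, ‖x i‖ ≤ 1)
    (γ : ℝ) (hγ : γ ∈ Set.Ioc (0 : ℝ) 1)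
    (w₀ : EuclideanSpace ℝ (Fin d)) (hw₀ : ‖w₀‖ = 1)
    (hsep : ∀ i, γ ≤ ⟪x i, w₀⟫)
    (L : EuclideanSpace ℝ (Fin d) → ℝ)
    (hL : ∀ v, L v = (1 / m) * ∑ i, Real.exp (-⟪x i, v⟫))
    (w : ℝ → EuclideanSpace ℝ (Fin d)) (hw0 : w 0 = 0)
    (hflow : ∀ t : ℝ, 0 ≤ t → HasDerivAt w (-(gradient L (w t))) t)
    (T : ℝ) (hT : 1 / γ ^ 2 < T)
    (α : ℝ) (hα : α ∈ Set.Icc (0 : ℝ) 1) :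
    ∃ S : Finset (Fin m), (1 - (γ ^ 2 * T) ^ (-α)) * m ≤ S.card ∧
      ∀ i ∈ S, (1 - α) * γ / 2 < ⟪x i, ‖w T‖⁻¹ • w T⟫ := by
  classical
  obtain ⟨hγ0, hγ1⟩ := hγ
  obtain ⟨hα0, hα1⟩ := hα
  set P : EuclideanSpace ℝ (Fin d) → EuclideanSpace ℝ (Fin d) :=
    fun v => (m:ℝ)⁻¹ • ∑ i, Real.exp (-⟪x i, v⟫) • x i with hP
  have hm' : (0:ℝ) < m := by exact_mod_cast hm
  have hLpos : ∀ v, 0 < L v := by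
    intro v; rw [hL v]
    apply mul_pos (by positivity)
    exact Finset.sum_pos (fun i _ => Real.exp_pos _) ⟨⟨0, hm⟩, Finset.mem_univ _⟩
  have hL0 : L 0 = 1 := by
    rw [hL 0]
    simp only [inner_zero_right, neg_zero, Real.exp_zero, Finset.sum_const, Finset.card_univ,
      Fintype.card_fin, nsmul_eq_mul, mul_one]
    rw [one_div, inv_mul_cancel₀ hm'.ne']
  have hT0 : (0:ℝ) < T := lt_trans (by positivity) hT
  have hγT : 1 < γ^2 * T := by
    rw [div_lt_iff₀ (by positivity)] at hT; linarith [hT]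
  have hw' : ∀ t : ℝ, 0 ≤ t → HasDerivAt w (P (w t)) t := by
    intro t ht
    have := hflow t ht
    rwa [(grad_lemma x L hL (w t)).gradient, neg_neg] at this
  -- inner product lower bound
  have hPin : ∀ v, γ * L v ≤ ⟪w₀, P v⟫ := by
    intro v
    have h1 : ⟪w₀, P v⟫ = (m:ℝ)⁻¹ * ∑ i, Real.exp (-⟪x i, v⟫) * ⟪x i, w₀⟫ := by
      rw [hP]
      simp only [real_inner_smul_right, inner_sum]
      congr 1
      refine Finset.sum_congr rfl fun i _ => ?_
      rw [real_inner_comm w₀ (x i)]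
    have hsum : γ * ∑ i, Real.exp (-⟪x i, v⟫) ≤ ∑ i, Real.exp (-⟪x i, v⟫) * ⟪x i, w₀⟫ := by
      rw [Finset.mul_sum]
      refine Finset.sum_le_sum fun i _ => ?_
      rw [mul_comm γ]
      exact mul_le_mul_of_nonneg_left (hsep i) (Real.exp_pos _).le
    rw [h1, hL v, one_div]
    calc γ * ((m:ℝ)⁻¹ * ∑ i, Real.exp (-⟪x i, v⟫))
        = (m:ℝ)⁻¹ * (γ * ∑ i, Real.exp (-⟪x i, v⟫)) := by ring
      _ ≤ _ := mul_le_mul_of_nonneg_left hsum (by positivity)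
  -- norm upper bound on P
  have hPle : ∀ v, ‖P v‖ ≤ L v := by
    intro v
    rw [hP, hL v, one_div]
    simp only [norm_smul, norm_inv, Real.norm_natCast]
    refine mul_le_mul_of_nonneg_left ?_ (by positivity)
    refine (norm_sum_le _ _).trans ?_
    refine Finset.sum_le_sum fun i _ => ?_
    rw [norm_smul, Real.norm_eq_abs, abs_of_pos (Real.exp_pos _)]
    exact mul_le_of_le_one_right (Real.exp_pos _).le (hx i)
  -- norm lower bound on P
  have hPge : ∀ v, γ * L v ≤ ‖P v‖ := by
    intro v
    refine (hPin v).trans ?_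
    calc ⟪w₀, P v⟫ ≤ ‖w₀‖ * ‖P v‖ := real_inner_le_norm _ _
      _ = ‖P v‖ := by rw [hw₀, one_mul]
  -- derivative of the loss along the flow
  have hg' : ∀ t : ℝ, 0 ≤ t → HasDerivAt (fun t => L (w t)) (-(‖P (w t)‖^2)) t := by
    intro t ht
    have hF : HasFDerivAt L ((InnerProductSpace.toDual ℝ _)
        (-P (w t))) (w t) := (grad_lemma x L hL (w t)).hasFDerivAt
    have h2 := hF.comp_hasDerivAt t (hw' t ht)
    have hval : ((InnerProductSpace.toDual ℝ _) (-P (w t))) (P (w t)) = -(‖P (w t)‖^2) := by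
      rw [InnerProductSpace.toDual_apply_apply, inner_neg_left, real_inner_self_eq_norm_sq]
    rw [hval] at h2
    exact h2
  have hwc : ContinuousOn w (Set.Icc 0 T) :=
    fun t ht => ((hw' t ht.1).continuousAt).continuousWithinAt
  have hgc : ContinuousOn (fun t => L (w t)) (Set.Icc 0 T) :=
    fun t ht => ((hg' t ht.1).continuousAt).continuousWithinAt
  -- loss bound : L (w T) ≤ (1 + γ² T)⁻¹
  have hub : L (w T) ≤ (1 + γ^2 * T)⁻¹ := by
    have hmono : MonotoneOn (fun t => (L (w t))⁻¹ - γ^2 * t) (Set.Icc 0 T) := by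
      have hder : ∀ t ∈ Set.Ioo (0:ℝ) T,
          HasDerivAt (fun t => (L (w t))⁻¹ - γ^2 * t)
            (‖P (w t)‖^2 / (L (w t))^2 - γ^2) t := by
        intro t ht
        have h1 := ((hg' t ht.1.le).inv (hLpos (w t)).ne')
        have h2 : HasDerivAt (fun t : ℝ => γ^2 * t) (γ^2) t := by
          simpa using (hasDerivAt_id t).const_mul (γ^2)
        convert h1.sub h2 using 1
        · rfl
        · rfl
        · rfl
        ring
      refine monotoneOn_of_deriv_nonneg (convex_Icc 0 T) ?_ ?_ ?_
      · exact (hgc.inv₀ (fun t ht => (hLpos (w t)).ne')).sub (by fun_prop)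
      · intro t ht
        rw [interior_Icc] at ht
        exact (hder t ht).differentiableAt.differentiableWithinAt
      · intro t ht
        rw [interior_Icc] at ht
        rw [(hder t ht).deriv]
        have h3 : γ * L (w t) ≤ ‖P (w t)‖ := hPge (w t)
        have h4 : (γ * L (w t))^2 ≤ ‖P (w t)‖^2 :=
          pow_le_pow_left₀ (mul_nonneg hγ0.le (hLpos _).le) h3 2
        rw [sub_nonneg, le_div_iff₀ (pow_pos (hLpos _) 2)]
        calc γ^2 * (L (w t))^2 = (γ * L (w t))^2 := by ring
          _ ≤ _ := h4
    have := hmono (Set.left_mem_Icc.2 hT0.le) (Set.right_mem_Icc.2 hT0.le) hT0.le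
    simp only [hw0, hL0, inv_one, mul_zero, sub_zero] at this
    have h5 : 1 + γ^2 * T ≤ (L (w T))⁻¹ := by linarith
    calc L (w T) = ((L (w T))⁻¹)⁻¹ := by rw [inv_inv]
      _ ≤ (1 + γ^2*T)⁻¹ := by
          apply inv_anti₀ (by positivity) h5
  -- norm bound : ‖w T‖ ≤ γ⁻¹ * (- log L(w T))
  have hnb : ‖w T‖ ≤ -(γ⁻¹ * Real.log (L (w T))) := by
    have key := image_norm_le_of_norm_deriv_right_le_deriv_boundary'
      (f := w) (f' := fun t => P (w t)) (a := 0) (b := T) hwc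
      (fun t ht => (hw' t ht.1).hasDerivWithinAt)
      (B := fun t => -(γ⁻¹ * Real.log (L (w t))))
      (B' := fun t => γ⁻¹ * (‖P (w t)‖^2 / L (w t)))
      (by simp [hw0, hL0])
      (by
        refine (ContinuousOn.mul continuousOn_const ?_).neg
        exact Real.continuousOn_log.comp hgc (fun t ht => (hLpos (w t)).ne'))
      (fun t ht => by
        have h1 := ((hg' t ht.1).log (hLpos (w t)).ne').const_mul (γ⁻¹) |>.neg
        have : -(γ⁻¹ * (-(‖P (w t)‖^2) / L (w t))) = γ⁻¹ * (‖P (w t)‖^2 / L (w t)) := by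
          field_simp
        rw [this] at h1
        exact h1.hasDerivWithinAt)
      (fun t ht => by
        have h3 : γ * L (w t) ≤ ‖P (w t)‖ := hPge (w t)
        have hLp := hLpos (w t)
        show ‖P (w t)‖ ≤ γ⁻¹ * (‖P (w t)‖^2 / L (w t))
        have heq : γ⁻¹ * (‖P (w t)‖^2 / L (w t)) = ‖P (w t)‖^2 / (γ * L (w t)) := by
          field_simp
        rw [heq, le_div_iff₀ (mul_pos hγ0 hLp)]
        calc ‖P (w t)‖ * (γ * L (w t)) ≤ ‖P (w t)‖ * ‖P (w t)‖ :=
              mul_le_mul_of_nonneg_left h3 (norm_nonneg _)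
          _ = ‖P (w t)‖^2 := (sq _).symm)
    exact key (Set.right_mem_Icc.2 hT0.le)
  -- w T ≠ 0
  have hwT : w T ≠ 0 := by
    have hp' : ∀ t : ℝ, 0 ≤ t → HasDerivAt (fun t => ⟪w₀, w t⟫) (⟪w₀, P (w t)⟫) t := by
      intro t ht
      exact (innerSL ℝ w₀).hasFDerivAt.comp_hasDerivAt t (hw' t ht)
    have hsm : StrictMonoOn (fun t => ⟪w₀, w t⟫) (Set.Icc 0 T) := by
      refine strictMonoOn_of_deriv_pos (convex_Icc 0 T) ?_ ?_
      · exact (innerSL ℝ w₀).continuous.comp_continuousOn hwc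
      · intro t ht
        rw [interior_Icc] at ht
        rw [(hp' t ht.1.le).deriv]
        exact lt_of_lt_of_le (mul_pos hγ0 (hLpos _)) (hPin (w t))
    have := hsm (Set.left_mem_Icc.2 hT0.le) (Set.right_mem_Icc.2 hT0.le) hT0
    simp only [hw0, inner_zero_right] at this
    intro h
    rw [h, inner_zero_right] at this
    exact lt_irrefl _ this
  -- counting argument
  have hn : (0:ℝ) < ‖w T‖ := norm_pos_iff.2 hwT
  set θ : ℝ := (1 - α) * γ / 2 with hθdef
  have hθ0 : 0 ≤ θ := by
    apply div_nonneg _ (by norm_num)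
    exact mul_nonneg (by linarith) hγ0.le
  set S : Finset (Fin m) := Finset.univ.filter
      (fun i => θ < ⟪x i, ‖w T‖⁻¹ • w T⟫) with hS
  refine ⟨S, ?_, fun i hi => (Finset.mem_filter.1 hi).2⟩
  set B : Finset (Fin m) := Finset.univ.filter
      (fun i => ¬ (θ < ⟪x i, ‖w T‖⁻¹ • w T⟫)) with hB
  have hcard : S.card + B.card = m := by
    rw [hS, hB, Finset.card_filter_add_card_filter_not]
    simp
  -- for i in B, loss term is large
  have hBterm : ∀ i ∈ B, Real.exp (-(θ * ‖w T‖)) ≤ Real.exp (-⟪x i, w T⟫) := by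
    intro i hi
    have h1 : ⟪x i, ‖w T‖⁻¹ • w T⟫ ≤ θ := not_lt.1 (Finset.mem_filter.1 hi).2
    rw [real_inner_smul_right] at h1
    have h2 : ⟪x i, w T⟫ ≤ θ * ‖w T‖ := by
      rw [← mul_le_mul_iff_right₀ (inv_pos.2 hn)]
      calc ‖w T‖⁻¹ * ⟪x i, w T⟫ ≤ θ := h1
        _ = ‖w T‖⁻¹ * (θ * ‖w T‖) := by field_simp
    exact Real.exp_le_exp.2 (by linarith)
  have hBcard : (B.card : ℝ) * Real.exp (-(θ * ‖w T‖)) ≤ m * L (w T) := by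
    have h1 : (B.card : ℝ) * Real.exp (-(θ * ‖w T‖)) = ∑ _i ∈ B, Real.exp (-(θ * ‖w T‖)) := by
      rw [Finset.sum_const, nsmul_eq_mul]
    rw [h1]
    have h2 : ∑ i ∈ B, Real.exp (-(θ * ‖w T‖)) ≤ ∑ i ∈ B, Real.exp (-⟪x i, w T⟫) :=
      Finset.sum_le_sum hBterm
    have h3 : ∑ i ∈ B, Real.exp (-⟪x i, w T⟫) ≤ ∑ i, Real.exp (-⟪x i, w T⟫) :=
      Finset.sum_le_sum_of_subset_of_nonneg (Finset.subset_univ B)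
        (fun i _ _ => (Real.exp_pos _).le)
    have h4 : (m : ℝ) * L (w T) = ∑ i, Real.exp (-⟪x i, w T⟫) := by
      rw [hL (w T)]; field_simp
    linarith
  -- key bound : B.card ≤ (γ²T)^(-α) * m
  have hgT := hLpos (w T)
  have hkey : (B.card : ℝ) ≤ (γ^2*T)^(-α) * m := by
    have h1 : (B.card : ℝ) ≤ m * L (w T) * Real.exp (θ * ‖w T‖) := by
      have e1 : (B.card : ℝ) = (B.card : ℝ) * Real.exp (-(θ * ‖w T‖)) * Real.exp (θ * ‖w T‖) := by
        rw [mul_assoc, ← Real.exp_add]; simp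
      rw [e1]
      exact mul_le_mul_of_nonneg_right hBcard (Real.exp_pos _).le
    have h2 : Real.exp (θ * ‖w T‖) ≤ (L (w T)) ^ (-((1-α)/2) : ℝ) := by
      have hθn : θ * ‖w T‖ ≤ ((1-α)/2) * (-Real.log (L (w T))) := by
        calc θ * ‖w T‖ ≤ θ * -(γ⁻¹ * Real.log (L (w T))) :=
              mul_le_mul_of_nonneg_left hnb hθ0
          _ = ((1-α)/2) * (-Real.log (L (w T))) := by
              rw [hθdef]; field_simp
      refine (Real.exp_le_exp.2 hθn).trans_eq ?_
      rw [Real.rpow_def_of_pos hgT]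
      congr 1; ring
    have h3 : L (w T) * Real.exp (θ * ‖w T‖) ≤ (L (w T)) ^ ((1+α)/2 : ℝ) := by
      calc L (w T) * Real.exp (θ * ‖w T‖)
          ≤ L (w T) * (L (w T)) ^ (-((1-α)/2) : ℝ) :=
            mul_le_mul_of_nonneg_left h2 hgT.le
        _ = (L (w T)) ^ ((1:ℝ) + -((1-α)/2)) := by
            rw [Real.rpow_add hgT, Real.rpow_one]
        _ = (L (w T)) ^ ((1+α)/2 : ℝ) := by congr 1; ring
    have h4 : (L (w T)) ^ ((1+α)/2 : ℝ) ≤ (γ^2*T) ^ (-((1+α)/2) : ℝ) := by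
      have hle : L (w T) ≤ (γ^2*T)⁻¹ := by
        refine hub.trans (inv_anti₀ (by positivity) (by linarith))
      calc (L (w T)) ^ ((1+α)/2:ℝ) ≤ ((γ^2*T)⁻¹) ^ ((1+α)/2:ℝ) :=
            Real.rpow_le_rpow hgT.le hle (by linarith)
        _ = (γ^2*T) ^ (-((1+α)/2):ℝ) := by
            rw [Real.inv_rpow (by positivity), ← Real.rpow_neg (by positivity)]
    have h5 : (γ^2*T) ^ (-((1+α)/2):ℝ) ≤ (γ^2*T) ^ (-α) :=
      Real.rpow_le_rpow_of_exponent_le hγT.le (by linarith)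
    have h6 : L (w T) * Real.exp (θ * ‖w T‖) ≤ (γ^2*T)^(-α) :=
      le_trans h3 (le_trans h4 h5)
    calc (B.card : ℝ) ≤ m * L (w T) * Real.exp (θ * ‖w T‖) := h1
      _ = (m:ℝ) * (L (w T) * Real.exp (θ * ‖w T‖)) := by ring
      _ ≤ (m:ℝ) * ((γ^2*T)^(-α)) := mul_le_mul_of_nonneg_left h6 hm'.le
      _ = ((γ^2*T)^(-α)) * m := by ring
  have hSB : (S.card : ℝ) + B.card = m := by exact_mod_cast hcard
  have : (1 - (γ^2*T)^(-α)) * m = m - ((γ^2*T)^(-α)) * m := by ring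
  rw [this]
  linarith
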